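/- Let ρ(x_1,x_2) = ρ_1(x_1) ⊗ ρ_2(x_2) be a ccq-state of product form on C = C_1⊗C_2, where ρ_1 is a cq-state on {0,1}^{n_1} with side information C_1 and ρ_2 a cq-state on {0,1}^{n_2} with side information C_2. Let Ext: {0,1}^{n_1}×{0,1}^{n_2} → {0,1}^m and M := 2^m. Then there exists a POVM {G_{z_2}}_{z_2∈{0,1}^{n_2}} on C_2 such that (1/M)·(∑_{y,x_1} ‖∑_{x_2: Ext(x_1,x_2)=y} ρ_1(x_1)⊗ρ_2(x_2) − (1/M)∑_{x_2} ρ_1(x_1)⊗ρ_2(x_2)‖₁)² ≤ ∑_{x_1,x_2,z_2,y} (δ_{Ext(x_1,x_2)=y} − 1/M)(δ_{Ext(x_1,z_2)=y} − 1/M) · Tr(ρ_1(x_1)) · Tr(ρ_2(x_2) G_{z_2}). -/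

import Mathlib

open Kronecker Matrix
open scoped ComplexOrder

/-- Trace norm of a complex matrix: `Tr √(Rᴴ R)`. -/
noncomputable def traceNorm {n : Type*} [Fintype n] [DecidableEq n] (R : Matrix n n ℂ) : ℝ :=
  ((Matrix.isHermitian_conjTranspose_mul_self R).eigenvectorUnitary.1 *
    Matrix.diagonal (((↑) : ℝ → ℂ) ∘ (√·) ∘ (Matrix.isHermitian_conjTranspose_mul_self R).eigenvalues) *
    (star (Matrix.isHermitian_conjTranspose_mul_self R).eigenvectorUnitary :
      Matrix n n ℂ)).trace.re

namespace Matrix.PosSemidef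

open scoped MatrixOrder

variable {n : Type*} [Fintype n] [DecidableEq n]

noncomputable def sqrt {A : Matrix n n ℂ} (_hA : A.PosSemidef) : Matrix n n ℂ := CFC.sqrt A

lemma sqrt_mul_self {A : Matrix n n ℂ} (hA : A.PosSemidef) : hA.sqrt * hA.sqrt = A :=
  CFC.sqrt_mul_sqrt_self A hA.nonneg

lemma posSemidef_sqrt {A : Matrix n n ℂ} (hA : A.PosSemidef) : hA.sqrt.PosSemidef :=
  Matrix.nonneg_iff_posSemidef.mp (CFC.sqrt_nonneg A)

lemma sq_sqrt {A : Matrix n n ℂ} (hA : A.PosSemidef) : hA.sqrt ^ 2 = A :=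
  CFC.sq_sqrt A hA.nonneg

lemma eq_sqrt_of_sq_eq {B : Matrix n n ℂ} (hB : B.PosSemidef) {A : Matrix n n ℂ}
    (hA : A.PosSemidef) (h : B ^ 2 = A) : B = hA.sqrt :=
  ((CFC.sqrt_eq_iff A B hA.nonneg hB.nonneg).mpr (by rw [← h, pow_two])).symm

end Matrix.PosSemidef

lemma Matrix.posSemidef_iff_eq_transpose_mul_self {n : Type*} [Fintype n] [DecidableEq n]
    {A : Matrix n n ℂ} : A.PosSemidef ↔ ∃ B : Matrix n n ℂ, A = Bᴴ * B := by
  constructor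
  · intro hA
    refine ⟨hA.sqrt, ?_⟩
    rw [hA.posSemidef_sqrt.1, hA.sqrt_mul_self]
  · rintro ⟨B, rfl⟩
    exact Matrix.posSemidef_conjTranspose_mul_self B

namespace CSB



variable {n : Type*} [Fintype n] [DecidableEq n]

lemma trace_ctms_re (A : Matrix n n ℂ) :
    (Aᴴ * A).trace.re = ∑ j, ∑ k, Complex.normSq (A k j) := by
  simp only [Matrix.trace, Matrix.diag, Matrix.mul_apply, Matrix.conjTranspose_apply]
  rw [Complex.re_sum]
  congr 1; ext j
  rw [Complex.re_sum]
  congr 1; ext k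
  simp [Complex.normSq_apply, Complex.mul_re]

lemma trace_ctms_nonneg (A : Matrix n n ℂ) : 0 ≤ (Aᴴ * A).trace.re := by
  rw [trace_ctms_re]
  exact Finset.sum_nonneg fun j _ => Finset.sum_nonneg fun k _ => Complex.normSq_nonneg _

lemma eq_zero_of_trace_ctms (A : Matrix n n ℂ) (h : (Aᴴ * A).trace = 0) : A = 0 := by
  have h' : ∑ j, ∑ k, Complex.normSq (A k j) = 0 := by
    rw [← trace_ctms_re, h]; simp
  ext k j
  have h1 : ∀ j ∈ Finset.univ, (0:ℝ) ≤ ∑ k, Complex.normSq (A k j) := by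
    intro j _; exact Finset.sum_nonneg fun k _ => Complex.normSq_nonneg _
  have h2 := (Finset.sum_eq_zero_iff_of_nonneg h1).mp h' j (Finset.mem_univ j)
  have h3 : ∀ k ∈ Finset.univ, (0:ℝ) ≤ Complex.normSq (A k j) := by
    intro k _; exact Complex.normSq_nonneg _
  have h4 := (Finset.sum_eq_zero_iff_of_nonneg h3).mp h2 k (Finset.mem_univ k)
  simpa using Complex.normSq_eq_zero.mp h4

lemma trace_cs (X Y : Matrix n n ℂ) :
    ‖(Xᴴ * Y).trace‖ ≤
      Real.sqrt ((Xᴴ * X).trace.re) * Real.sqrt ((Yᴴ * Y).trace.re) := by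
  classical
  let x : EuclideanSpace ℂ (n × n) := WithLp.toLp 2 (fun p : n × n => X p.1 p.2)
  let y : EuclideanSpace ℂ (n × n) := WithLp.toLp 2 (fun p : n × n => Y p.1 p.2)
  have hinner : (inner ℂ x y : ℂ) = (Xᴴ * Y).trace := by
    simp only [PiLp.inner_apply, RCLike.inner_apply, Matrix.trace, Matrix.diag,
      Matrix.mul_apply, Matrix.conjTranspose_apply, x, y]
    rw [← Finset.univ_product_univ, Finset.sum_product]
    rw [Finset.sum_comm]
    exact Finset.sum_congr rfl fun _ _ => Finset.sum_congr rfl fun _ _ => mul_comm _ _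
  have hx : ‖x‖ = Real.sqrt ((Xᴴ * X).trace.re) := by
    rw [EuclideanSpace.norm_eq, trace_ctms_re]
    congr 1
    rw [← Finset.univ_product_univ, Finset.sum_product, Finset.sum_comm]
    congr 1; ext j; congr 1; ext k
    simp [x, Complex.sq_norm, Complex.normSq_apply]
  have hy : ‖y‖ = Real.sqrt ((Yᴴ * Y).trace.re) := by
    rw [EuclideanSpace.norm_eq, trace_ctms_re]
    congr 1
    rw [← Finset.univ_product_univ, Finset.sum_product, Finset.sum_comm]
    congr 1; ext j; congr 1; ext k
    simp [y, Complex.sq_norm, Complex.normSq_apply]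
  calc ‖(Xᴴ * Y).trace‖ = ‖(inner ℂ x y : ℂ)‖ := by rw [hinner]
    _ ≤ ‖x‖ * ‖y‖ := norm_inner_le_norm x y
    _ = _ := by rw [hx, hy]




variable {n : Type*} [Fintype n] [DecidableEq n]

/-- Apply a real weight function in the eigenbasis of a Hermitian matrix. -/
noncomputable def mfun {A : Matrix n n ℂ} (hA : A.IsHermitian) (w : n → ℝ) : Matrix n n ℂ :=
  (hA.eigenvectorUnitary : Matrix n n ℂ) * Matrix.diagonal (fun i => (w i : ℂ)) *
    (star (hA.eigenvectorUnitary : Matrix n n ℂ))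

variable {A : Matrix n n ℂ} (hA : A.IsHermitian)

lemma mfun_mul (w w' : n → ℝ) : mfun hA w * mfun hA w' = mfun hA (fun i => w i * w' i) := by
  unfold mfun
  have h := (Matrix.mem_unitaryGroup_iff').mp (hA.eigenvectorUnitary).2
  calc _ = (hA.eigenvectorUnitary : Matrix n n ℂ) * Matrix.diagonal (fun i => (w i : ℂ)) *
        ((star (hA.eigenvectorUnitary : Matrix n n ℂ)) * (hA.eigenvectorUnitary : Matrix n n ℂ)) *
        Matrix.diagonal (fun i => (w' i : ℂ)) * (star (hA.eigenvectorUnitary : Matrix n n ℂ)) := by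
        simp only [Matrix.mul_assoc]
    _ = _ := by
        rw [h]
        simp only [Matrix.mul_one, Matrix.diagonal_mul_diagonal, Matrix.mul_assoc]
        push_cast
        rfl

lemma mfun_herm (w : n → ℝ) : (mfun hA w).IsHermitian := by
  unfold mfun
  have hd : (Matrix.diagonal (fun i => (w i : ℂ)))ᴴ = Matrix.diagonal (fun i => (w i : ℂ)) := by
    ext i j
    simp only [Matrix.conjTranspose_apply, Matrix.diagonal_apply]
    split
    · next h => subst h; simp [Complex.conj_ofReal]
    · next h => rw [if_neg (fun hc => h hc.symm)]; simp
  unfold Matrix.IsHermitian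
  simp only [Matrix.star_eq_conjTranspose, Matrix.conjTranspose_mul,
    Matrix.conjTranspose_conjTranspose, hd, Matrix.mul_assoc]

lemma mfun_trace (w : n → ℝ) : (mfun hA w).trace = ∑ i, (w i : ℂ) := by
  unfold mfun
  rw [Matrix.trace_mul_cycle]
  have h := (Matrix.mem_unitaryGroup_iff').mp (hA.eigenvectorUnitary).2
  rw [h, Matrix.one_mul, Matrix.trace_diagonal]

lemma mfun_eigenvalues : mfun hA (hA.eigenvalues) = A := by
  conv_rhs => rw [hA.spectral_theorem]
  rfl

lemma mfun_one : mfun hA (fun _ => 1) = 1 := by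
  unfold mfun
  have h := (Matrix.mem_unitaryGroup_iff).mp (hA.eigenvectorUnitary).2
  simpa using h

lemma mfun_add (w w' : n → ℝ) :
    mfun hA w + mfun hA w' = mfun hA (fun i => w i + w' i) := by
  unfold mfun
  rw [← Matrix.add_mul, ← Matrix.mul_add]
  congr 1
  congr 1
  rw [Matrix.diagonal_add]
  congr 1
  ext i
  push_cast
  rfl

lemma mfun_smul (r : ℝ) (w : n → ℝ) : r • mfun hA w = mfun hA (fun i => r * w i) := by
  have hd : r • (Matrix.diagonal (fun i => (w i : ℂ))) =
      Matrix.diagonal (fun i => ((r * w i : ℝ) : ℂ)) := by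
    ext i j
    simp [Matrix.diagonal_apply, Complex.real_smul, mul_ite, mul_zero]
  unfold mfun
  rw [← Matrix.smul_mul, ← Matrix.mul_smul, hd]

lemma mfun_zero : mfun hA (fun _ => 0) = 0 := by
  unfold mfun
  have hd : Matrix.diagonal (fun i : n => (((fun _ : n => (0:ℝ)) i : ℝ) : ℂ)) = 0 := by
    rw [show (fun i : n => (((fun _ : n => (0:ℝ)) i : ℝ) : ℂ)) = fun _ => 0 by funext i; simp]
    exact Matrix.diagonal_zero
  rw [hd, Matrix.mul_zero, Matrix.zero_mul]

lemma mfun_posSemidef {w : n → ℝ} (hw : ∀ i, 0 ≤ w i) : (mfun hA w).PosSemidef := by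
  have hd : (Matrix.diagonal (fun i => (w i : ℂ))).PosSemidef := by
    rw [Matrix.posSemidef_diagonal_iff]
    intro i
    exact_mod_cast Complex.zero_le_real.mpr (hw i)
  exact hd.mul_mul_conjTranspose_same _

lemma mfun_congr {w w' : n → ℝ} (h : ∀ i, w i = w' i) : mfun hA w = mfun hA w' := by
  rw [show w = w' from funext h]

lemma traceNorm_eq_sqrt (R : Matrix n n ℂ) :
    traceNorm R = ((Matrix.posSemidef_conjTranspose_mul_self R).sqrt).trace.re := by
  have hR := Matrix.isHermitian_conjTranspose_mul_self R
  have hpsd : (mfun hR (fun i => Real.sqrt (hR.eigenvalues i))).PosSemidef :=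
    mfun_posSemidef hR (fun i => Real.sqrt_nonneg _)
  have hsq : (mfun hR (fun i => Real.sqrt (hR.eigenvalues i))) ^ 2 = Rᴴ * R := by
    rw [pow_two, mfun_mul]
    rw [mfun_congr hR (w' := hR.eigenvalues) (fun i => Real.mul_self_sqrt
      ((Matrix.posSemidef_conjTranspose_mul_self R).eigenvalues_nonneg i))]
    exact mfun_eigenvalues hR
  rw [← hpsd.eq_sqrt_of_sq_eq _ hsq]
  rfl






variable {n : Type*} [Fintype n] [DecidableEq n]

lemma herm_trace_im {A : Matrix n n ℂ} (hA : A.IsHermitian) : A.trace.im = 0 := by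
  have h : ∀ i, (A i i).im = 0 := by
    intro i
    have := congrFun (congrFun hA i) i
    rw [Matrix.conjTranspose_apply] at this
    have h2 : (starRingEnd ℂ) (A i i) = A i i := this
    rw [Complex.conj_eq_iff_im] at h2
    exact h2
  simp [Matrix.trace, Matrix.diag, Complex.im_sum, h]

lemma herm_trace_real {A : Matrix n n ℂ} (hA : A.IsHermitian) :
    A.trace = (A.trace.re : ℂ) := by
  rw [Complex.ext_iff]
  simp [herm_trace_im hA]

lemma psd_trace_zero {A : Matrix n n ℂ} (hA : A.PosSemidef) (h : A.trace = 0) : A = 0 := by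
  have hs : hA.sqrt * hA.sqrt = A := hA.sqrt_mul_self
  have hherm : (hA.sqrt)ᴴ = hA.sqrt := hA.posSemidef_sqrt.1
  have h0 : ((hA.sqrt)ᴴ * hA.sqrt).trace = 0 := by rw [hherm, hs, h]
  have := eq_zero_of_trace_ctms _ h0
  rw [← hs, this, Matrix.mul_zero]

/-- two PSD matrices summing to zero are both zero -/
lemma psd_add_eq_zero {A B : Matrix n n ℂ} (hA : A.PosSemidef) (hB : B.PosSemidef)
    (h : A + B = 0) : A = 0 := by
  apply psd_trace_zero hA
  have htr : A.trace + B.trace = 0 := by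
    rw [← Matrix.trace_add, h, Matrix.trace_zero]
  have hAre : 0 ≤ A.trace.re := by
    have hs : (hA.sqrt)ᴴ * hA.sqrt = A := by rw [hA.posSemidef_sqrt.1, hA.sqrt_mul_self]
    rw [← hs]; exact trace_ctms_nonneg _
  have hBre : 0 ≤ B.trace.re := by
    have hs : (hB.sqrt)ᴴ * hB.sqrt = B := by rw [hB.posSemidef_sqrt.1, hB.sqrt_mul_self]
    rw [← hs]; exact trace_ctms_nonneg _
  have him : A.trace.im = 0 := herm_trace_im hA.1
  have hre : A.trace.re = 0 := by
    have := congrArg Complex.re htr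
    simp only [Complex.add_re, Complex.zero_re] at this
    linarith
  rw [Complex.ext_iff]
  simp [hre, him]

lemma psd_sum {ι : Type*} (s : Finset ι) (f : ι → Matrix n n ℂ)
    (h : ∀ i ∈ s, (f i).PosSemidef) : (∑ i ∈ s, f i).PosSemidef := by
  classical
  induction s using Finset.induction_on with
  | empty => simpa using Matrix.PosSemidef.zero
  | insert a s hni ih =>
    rw [Finset.sum_insert hni]
    exact ((h _ (Finset.mem_insert_self _ _)).add
      (ih fun i hi => h i (Finset.mem_insert_of_mem hi)))

lemma kron_conjTranspose {m : Type*} [Fintype m] [DecidableEq m]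
    (A : Matrix m m ℂ) (B : Matrix n n ℂ) : (A ⊗ₖ B)ᴴ = Aᴴ ⊗ₖ Bᴴ := by
  ext ⟨i, j⟩ ⟨k, l⟩
  simp [Matrix.conjTranspose_apply, Matrix.kroneckerMap_apply, star_mul']

lemma psd_kron {m : Type*} [Fintype m] [DecidableEq m]
    {A : Matrix m m ℂ} {B : Matrix n n ℂ} (hA : A.PosSemidef) (hB : B.PosSemidef) :
    (A ⊗ₖ B).PosSemidef := by
  obtain ⟨C, hC⟩ := Matrix.posSemidef_iff_eq_transpose_mul_self.mp hA
  obtain ⟨D, hD⟩ := Matrix.posSemidef_iff_eq_transpose_mul_self.mp hB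
  rw [hC, hD, Matrix.mul_kronecker_mul, ← kron_conjTranspose]
  exact Matrix.posSemidef_conjTranspose_mul_self _

/-- traceNorm of ρ ⊗ B for PSD ρ -/
lemma traceNorm_kron {m : Type*} [Fintype m] [DecidableEq m]
    {ρ : Matrix m m ℂ} (hρ : ρ.PosSemidef) (B : Matrix n n ℂ) :
    traceNorm (ρ ⊗ₖ B) = ρ.trace.re * traceNorm B := by
  set abs := (Matrix.posSemidef_conjTranspose_mul_self B).sqrt with habs
  have habs_psd : abs.PosSemidef := (Matrix.posSemidef_conjTranspose_mul_self B).posSemidef_sqrt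
  have habs_sq : abs ^ 2 = Bᴴ * B := (Matrix.posSemidef_conjTranspose_mul_self B).sq_sqrt
  have hcand : (ρ ⊗ₖ abs).PosSemidef := psd_kron hρ habs_psd
  have hsq : (ρ ⊗ₖ abs) ^ 2 = (ρ ⊗ₖ B)ᴴ * (ρ ⊗ₖ B) := by
    rw [pow_two, ← Matrix.mul_kronecker_mul, kron_conjTranspose, ← Matrix.mul_kronecker_mul,
      hρ.1]
    rw [← habs_sq, pow_two]
  have heq : ρ ⊗ₖ abs = (Matrix.posSemidef_conjTranspose_mul_self (ρ ⊗ₖ B)).sqrt :=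
    hcand.eq_sqrt_of_sq_eq _ hsq
  rw [traceNorm_eq_sqrt, traceNorm_eq_sqrt, ← habs]
  rw [← heq, Matrix.trace_kronecker]
  have h1 : ρ.trace = (ρ.trace.re : ℂ) := herm_trace_real hρ.1
  have h2 : abs.trace = (abs.trace.re : ℂ) := herm_trace_real habs_psd.1
  rw [h1, h2, ← Complex.ofReal_mul]
  simp


section herm

variable {B : Matrix n n ℂ} (hB : B.IsHermitian)

noncomputable def sgnw (hB : B.IsHermitian) : n → ℝ :=
  fun i => if hB.eigenvalues i < 0 then -1 else 1

noncomputable def signm (hB : B.IsHermitian) : Matrix n n ℂ := mfun hB (sgnw hB)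

noncomputable def absm (hB : B.IsHermitian) : Matrix n n ℂ :=
  mfun hB (fun i => |hB.eigenvalues i|)

lemma signm_mul_self : signm hB * signm hB = 1 := by
  unfold signm
  rw [mfun_mul]
  rw [mfun_congr hB (w' := fun _ => 1) (fun i => by unfold sgnw; split <;> norm_num)]
  exact mfun_one hB

lemma signm_herm : (signm hB)ᴴ = signm hB := mfun_herm hB _

lemma absm_eq_sqrt : (Matrix.posSemidef_conjTranspose_mul_self B).sqrt = absm hB := by
  have hpsd : (absm hB).PosSemidef := mfun_posSemidef hB (fun i => abs_nonneg _)
  have hsq : (absm hB) ^ 2 = Bᴴ * B := by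
    rw [pow_two]
    unfold absm
    rw [mfun_mul]
    rw [mfun_congr hB (w' := fun i => hB.eigenvalues i * hB.eigenvalues i)
      (fun i => by rw [abs_mul_abs_self])]
    rw [← mfun_mul, mfun_eigenvalues, hB.eq]
  exact (hpsd.eq_sqrt_of_sq_eq _ hsq).symm

lemma traceNorm_herm : traceNorm B = ∑ i, |hB.eigenvalues i| := by
  rw [traceNorm_eq_sqrt]
  rw [absm_eq_sqrt hB]
  unfold absm
  rw [mfun_trace]
  rw [Complex.re_sum]
  simp

include hB in
lemma traceNorm_herm_nonneg : 0 ≤ traceNorm B := by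
  rw [traceNorm_herm hB]
  exact Finset.sum_nonneg fun i _ => abs_nonneg _

lemma trace_mul_signm : (B * signm hB).trace = ((traceNorm B : ℝ) : ℂ) := by
  have hb : B * signm hB = absm hB := by
    unfold signm absm
    have hBe := congrArg (· * mfun hB (sgnw hB)) (mfun_eigenvalues hB)
    rw [← hBe, mfun_mul]
    exact mfun_congr hB (fun i => by
      unfold sgnw
      split
      · next h => rw [abs_of_neg h]; ring
      · next h => rw [abs_of_nonneg (not_lt.mp h)]; ring)
  rw [hb]
  unfold absm
  rw [mfun_trace, traceNorm_herm hB]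
  push_cast
  rfl

end herm

section sigma

variable {σ : Matrix n n ℂ} (hσ : σ.PosSemidef)

noncomputable def ew (hσ : σ.PosSemidef) : n → ℝ := hσ.1.eigenvalues

lemma ew_nonneg : ∀ i, 0 ≤ ew hσ i := fun i => hσ.eigenvalues_nonneg i

noncomputable def indw (hσ : σ.PosSemidef) : n → ℝ := fun i => if ew hσ i = 0 then 0 else 1
noncomputable def indcw (hσ : σ.PosSemidef) : n → ℝ := fun i => if ew hσ i = 0 then 1 else 0
noncomputable def f4w (hσ : σ.PosSemidef) : n → ℝ := fun i => Real.sqrt (Real.sqrt (ew hσ i))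
noncomputable def q4w (hσ : σ.PosSemidef) : n → ℝ :=
  fun i => if ew hσ i = 0 then 0 else (f4w hσ i)⁻¹
noncomputable def sw (hσ : σ.PosSemidef) : n → ℝ := fun i => Real.sqrt (ew hσ i)
noncomputable def ihw (hσ : σ.PosSemidef) : n → ℝ := fun i => q4w hσ i * q4w hσ i

noncomputable def Qm (hσ : σ.PosSemidef) : Matrix n n ℂ := mfun hσ.1 (indcw hσ)
noncomputable def Pm (hσ : σ.PosSemidef) : Matrix n n ℂ := mfun hσ.1 (indw hσ)
noncomputable def ihm (hσ : σ.PosSemidef) : Matrix n n ℂ := mfun hσ.1 (ihw hσ)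
noncomputable def shm (hσ : σ.PosSemidef) : Matrix n n ℂ := mfun hσ.1 (sw hσ)
noncomputable def f4m (hσ : σ.PosSemidef) : Matrix n n ℂ := mfun hσ.1 (f4w hσ)
noncomputable def q4m (hσ : σ.PosSemidef) : Matrix n n ℂ := mfun hσ.1 (q4w hσ)

lemma f4w_pos {i : n} (h : ew hσ i ≠ 0) : 0 < f4w hσ i := by
  unfold f4w
  have h1 : 0 < ew hσ i := lt_of_le_of_ne (ew_nonneg hσ i) (Ne.symm h)
  exact Real.sqrt_pos.mpr (Real.sqrt_pos.mpr h1)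

lemma f4_mul_q4 : ∀ i, f4w hσ i * q4w hσ i = indw hσ i := by
  intro i
  unfold q4w indw
  split
  · simp
  · next h => rw [mul_inv_cancel₀ (ne_of_gt (f4w_pos hσ h))]

lemma q4_mul_f4 : ∀ i, q4w hσ i * f4w hσ i = indw hσ i := by
  intro i; rw [mul_comm]; exact f4_mul_q4 hσ i

lemma f4_mul_f4 : ∀ i, f4w hσ i * f4w hσ i = sw hσ i := by
  intro i
  unfold f4w sw
  exact Real.mul_self_sqrt (Real.sqrt_nonneg _)

lemma sw_mul_sw : ∀ i, sw hσ i * sw hσ i = ew hσ i := by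
  intro i
  exact Real.mul_self_sqrt (ew_nonneg hσ i)

lemma Pm_add_Qm : Pm hσ + Qm hσ = 1 := by
  unfold Pm Qm
  rw [mfun_add]
  rw [mfun_congr hσ.1 (w' := fun _ => 1) (fun i => by unfold indw indcw; split <;> norm_num)]
  exact mfun_one hσ.1

lemma Qm_herm : (Qm hσ)ᴴ = Qm hσ := mfun_herm hσ.1 _
lemma ihm_herm : (ihm hσ)ᴴ = ihm hσ := mfun_herm hσ.1 _
lemma f4m_herm : (f4m hσ)ᴴ = f4m hσ := mfun_herm hσ.1 _
lemma q4m_herm : (q4m hσ)ᴴ = q4m hσ := mfun_herm hσ.1 _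
lemma shm_herm : (shm hσ)ᴴ = shm hσ := mfun_herm hσ.1 _

lemma shm_mul_shm : shm hσ * shm hσ = σ := by
  unfold shm
  rw [mfun_mul, mfun_congr hσ.1 (sw_mul_sw hσ)]
  exact mfun_eigenvalues hσ.1

lemma q4m_mul_q4m : q4m hσ * q4m hσ = ihm hσ := by
  unfold q4m ihm
  rw [mfun_mul]
  rfl

lemma f4m_mul_f4m : f4m hσ * f4m hσ = shm hσ := by
  unfold f4m shm
  rw [mfun_mul, mfun_congr hσ.1 (f4_mul_f4 hσ)]

lemma f4m_mul_q4m : f4m hσ * q4m hσ = Pm hσ := by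
  unfold f4m q4m Pm
  rw [mfun_mul, mfun_congr hσ.1 (f4_mul_q4 hσ)]

lemma q4m_mul_f4m : q4m hσ * f4m hσ = Pm hσ := by
  unfold q4m f4m Pm
  rw [mfun_mul, mfun_congr hσ.1 (q4_mul_f4 hσ)]

lemma sigma_mul_Qm : σ * Qm hσ = 0 := by
  unfold Qm
  have hBe := congrArg (· * mfun hσ.1 (indcw hσ)) (mfun_eigenvalues hσ.1)
  rw [← hBe, mfun_mul]
  rw [mfun_congr hσ.1 (w' := fun _ => 0) (fun i => by
    unfold indcw
    show ew hσ i * _ = 0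
    split
    · next h => rw [h]; ring
    · ring)]
  exact mfun_zero hσ.1

/-- support lemma : any PSD matrix dominated by σ is killed by Qm -/
lemma psd_mul_Qm_eq_zero {ρ : Matrix n n ℂ} (hρ : ρ.PosSemidef)
    (hle : (σ - ρ).PosSemidef) : ρ * Qm hσ = 0 := by
  have hQQ : Qm hσ * Qm hσ = Qm hσ := by
    unfold Qm
    rw [mfun_mul]
    exact mfun_congr hσ.1 (fun i => by unfold indcw; split <;> norm_num)
  have hQσQ : Qm hσ * σ * Qm hσ = 0 := by
    rw [Matrix.mul_assoc, sigma_mul_Qm, Matrix.mul_zero]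
  have hA : (Qm hσ * ρ * (Qm hσ)ᴴ).PosSemidef := hρ.mul_mul_conjTranspose_same _
  have hB2 : (Qm hσ * (σ - ρ) * (Qm hσ)ᴴ).PosSemidef := hle.mul_mul_conjTranspose_same _
  have hsum : Qm hσ * ρ * (Qm hσ)ᴴ + Qm hσ * (σ - ρ) * (Qm hσ)ᴴ = 0 := by
    rw [Qm_herm]
    have : Qm hσ * ρ * Qm hσ + Qm hσ * (σ - ρ) * Qm hσ = Qm hσ * σ * Qm hσ := by
      rw [Matrix.mul_sub, Matrix.sub_mul]
      abel
    rw [this, hQσQ]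
  have hQρQ : Qm hσ * ρ * Qm hσ = 0 := by
    have := psd_add_eq_zero hA hB2 hsum
    rwa [Qm_herm] at this
  -- now conclude ρ * Qm = 0
  have hsρ : hρ.sqrt * hρ.sqrt = ρ := hρ.sqrt_mul_self
  have hsh : (hρ.sqrt)ᴴ = hρ.sqrt := hρ.posSemidef_sqrt.1
  have hz : (hρ.sqrt * Qm hσ)ᴴ * (hρ.sqrt * Qm hσ) = Qm hσ * ρ * Qm hσ := by
    rw [Matrix.conjTranspose_mul, hsh, Qm_herm]
    calc Qm hσ * hρ.sqrt * (hρ.sqrt * Qm hσ)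
        = Qm hσ * (hρ.sqrt * hρ.sqrt) * Qm hσ := by simp only [Matrix.mul_assoc]
      _ = Qm hσ * ρ * Qm hσ := by rw [hsρ]
  have hz2 : hρ.sqrt * Qm hσ = 0 := by
    apply eq_zero_of_trace_ctms
    rw [hz, hQρQ, Matrix.trace_zero]
  calc ρ * Qm hσ = hρ.sqrt * (hρ.sqrt * Qm hσ) := by rw [← Matrix.mul_assoc, hsρ]
    _ = 0 := by rw [hz2, Matrix.mul_zero]

end sigma

section stepB

variable {σ B : Matrix n n ℂ}

lemma Pm_mul_eq_self (hσ : σ.PosSemidef) (h2 : Qm hσ * B = 0) : Pm hσ * B = B := by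
  have h := Pm_add_Qm hσ
  have : Pm hσ = 1 - Qm hσ := by rw [← h]; abel
  rw [this, Matrix.sub_mul, Matrix.one_mul, h2, sub_zero]

lemma mul_Pm_eq_self (hσ : σ.PosSemidef) (h1 : B * Qm hσ = 0) : B * Pm hσ = B := by
  have h := Pm_add_Qm hσ
  have : Pm hσ = 1 - Qm hσ := by rw [← h]; abel
  rw [this, Matrix.mul_sub, Matrix.mul_one, h1, sub_zero]

lemma stepB (hσ : σ.PosSemidef) (hσtr : σ.trace = 1)
    (hB : B.IsHermitian) (h1 : B * Qm hσ = 0) :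
    traceNorm B ^ 2 ≤ ((B * ihm hσ) * (B * ihm hσ)).trace.re := by
  have h2 : Qm hσ * B = 0 := by
    have := congrArg Matrix.conjTranspose h1
    rwa [Matrix.conjTranspose_mul, Qm_herm, hB.eq, Matrix.conjTranspose_zero] at this
  set W := signm hB with hW
  set X := q4m hσ * B * q4m hσ with hX
  set Y := f4m hσ * W * f4m hσ with hY
  have hXh : Xᴴ = X := by
    rw [hX, Matrix.conjTranspose_mul, Matrix.conjTranspose_mul, q4m_herm, hB.eq,
      Matrix.mul_assoc]
  have hYh : Yᴴ = Y := by
    rw [hY, Matrix.conjTranspose_mul, Matrix.conjTranspose_mul, f4m_herm, signm_herm,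
      Matrix.mul_assoc]
  have hXf : f4m hσ * X * f4m hσ = B := by
    calc f4m hσ * (q4m hσ * B * q4m hσ) * f4m hσ
        = (f4m hσ * q4m hσ) * B * (q4m hσ * f4m hσ) := by simp only [Matrix.mul_assoc]
      _ = Pm hσ * B * Pm hσ := by rw [f4m_mul_q4m, q4m_mul_f4m]
      _ = B := by rw [Pm_mul_eq_self hσ h2, mul_Pm_eq_self hσ h1]
  -- trace identity : Tr(B W) = Tr(Xᴴ Y)
  have htr1 : (B * W).trace = (Xᴴ * Y).trace := by
    rw [hXh]
    calc (B * W).trace = ((f4m hσ * X * f4m hσ) * W).trace := by rw [hXf]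
      _ = ((f4m hσ * X) * (f4m hσ * W)).trace := by simp only [Matrix.mul_assoc]
      _ = ((f4m hσ * W) * (f4m hσ * X)).trace := Matrix.trace_mul_comm _ _
      _ = ((f4m hσ * W * f4m hσ) * X).trace := by simp only [Matrix.mul_assoc]
      _ = (X * Y).trace := by rw [hY]; exact Matrix.trace_mul_comm _ _
  -- Tr(Xᴴ X) = Tr((B ih)(B ih))
  have htr2 : (Xᴴ * X).trace = ((B * ihm hσ) * (B * ihm hσ)).trace := by
    rw [hXh, hX]
    calc ((q4m hσ * B * q4m hσ) * (q4m hσ * B * q4m hσ)).trace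
        = ((q4m hσ) * (B * (q4m hσ * q4m hσ) * B * q4m hσ)).trace := by
          simp only [Matrix.mul_assoc]
      _ = ((B * (q4m hσ * q4m hσ) * B * q4m hσ) * q4m hσ).trace := Matrix.trace_mul_comm _ _
      _ = ((B * ihm hσ) * (B * ihm hσ)).trace := by
          rw [← q4m_mul_q4m hσ]; simp only [Matrix.mul_assoc]
  -- Tr(Yᴴ Y) = Tr(W sh W sh)
  have htr3 : (Yᴴ * Y).trace = ((W * shm hσ) * (W * shm hσ)).trace := by
    rw [hYh, hY]
    calc ((f4m hσ * W * f4m hσ) * (f4m hσ * W * f4m hσ)).trace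
        = ((f4m hσ) * (W * (f4m hσ * f4m hσ) * W * f4m hσ)).trace := by
          simp only [Matrix.mul_assoc]
      _ = ((W * (f4m hσ * f4m hσ) * W * f4m hσ) * f4m hσ).trace := Matrix.trace_mul_comm _ _
      _ = ((W * shm hσ) * (W * shm hσ)).trace := by
          rw [← f4m_mul_f4m hσ]; simp only [Matrix.mul_assoc]
  -- second Cauchy–Schwarz : |Tr(W sh W sh)| ≤ 1
  have hWW : W * W = 1 := signm_mul_self hB
  have hCS2 : ‖((W * shm hσ) * (W * shm hσ)).trace‖ ≤ 1 := by
    have hC : (shm hσ * W)ᴴ = W * shm hσ := by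
      rw [Matrix.conjTranspose_mul, shm_herm, signm_herm]
    have h := trace_cs (shm hσ * W) (W * shm hσ)
    rw [hC] at h
    have hCC : ((W * shm hσ) * (shm hσ * W)).trace = 1 := by
      calc ((W * shm hσ) * (shm hσ * W)).trace
          = (W * ((shm hσ * shm hσ) * W)).trace := by simp only [Matrix.mul_assoc]
        _ = (((shm hσ * shm hσ) * W) * W).trace := Matrix.trace_mul_comm _ _
        _ = (σ * (W * W)).trace := by rw [shm_mul_shm]; simp only [Matrix.mul_assoc]
        _ = 1 := by rw [hWW, Matrix.mul_one, hσtr]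
    have hDD : ((W * shm hσ)ᴴ * (W * shm hσ)).trace = 1 := by
      rw [Matrix.conjTranspose_mul, shm_herm, signm_herm]
      calc ((shm hσ * W) * (W * shm hσ)).trace
          = (shm hσ * ((W * W) * shm hσ)).trace := by simp only [Matrix.mul_assoc]
        _ = (((W * W) * shm hσ) * shm hσ).trace := Matrix.trace_mul_comm _ _
        _ = 1 := by rw [hWW, Matrix.one_mul, shm_mul_shm, hσtr]
    rw [hCC, hDD] at h
    simpa using h
  -- put everything together
  have htn : traceNorm B = (Xᴴ * Y).trace.re := by
    rw [← htr1, trace_mul_signm hB]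
    simp
  have hXXnn : 0 ≤ (Xᴴ * X).trace.re := trace_ctms_nonneg X
  have hYYnn : 0 ≤ (Yᴴ * Y).trace.re := trace_ctms_nonneg Y
  have hYY1 : (Yᴴ * Y).trace.re ≤ 1 := by
    calc (Yᴴ * Y).trace.re ≤ ‖(Yᴴ * Y).trace‖ := Complex.re_le_norm _
      _ = ‖((W * shm hσ) * (W * shm hσ)).trace‖ := by rw [htr3]
      _ ≤ 1 := hCS2
  have hcs := trace_cs X Y
  have hfin : traceNorm B ≤ Real.sqrt ((Xᴴ * X).trace.re) := by
    calc traceNorm B = (Xᴴ * Y).trace.re := htn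
      _ ≤ ‖(Xᴴ * Y).trace‖ := Complex.re_le_norm _
      _ ≤ Real.sqrt ((Xᴴ * X).trace.re) * Real.sqrt ((Yᴴ * Y).trace.re) := hcs
      _ ≤ Real.sqrt ((Xᴴ * X).trace.re) * 1 := by
          apply mul_le_mul_of_nonneg_left _ (Real.sqrt_nonneg _)
          calc Real.sqrt ((Yᴴ * Y).trace.re) ≤ Real.sqrt 1 := Real.sqrt_le_sqrt hYY1
            _ = 1 := Real.sqrt_one
      _ = Real.sqrt ((Xᴴ * X).trace.re) := mul_one _
  calc traceNorm B ^ 2 ≤ Real.sqrt ((Xᴴ * X).trace.re) ^ 2 :=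
        pow_le_pow_left₀ (traceNorm_herm_nonneg hB) hfin 2
    _ = (Xᴴ * X).trace.re := Real.sq_sqrt hXXnn
    _ = ((B * ihm hσ) * (B * ihm hσ)).trace.re := by rw [htr2]

end stepB

section more

variable {σ : Matrix n n ℂ}

lemma psd_trace_re_nonneg {A : Matrix n n ℂ} (hA : A.PosSemidef) : 0 ≤ A.trace.re := by
  have hs : (hA.sqrt)ᴴ * hA.sqrt = A := by rw [hA.posSemidef_sqrt.1, hA.sqrt_mul_self]
  rw [← hs]; exact trace_ctms_nonneg _

lemma ihm_sigma_ihm (hσ : σ.PosSemidef) : ihm hσ * σ * ihm hσ = Pm hσ := by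
  have hBe := congrArg (fun M => ihm hσ * M * ihm hσ) (mfun_eigenvalues hσ.1)
  rw [← hBe]
  unfold ihm Pm
  rw [mfun_mul, mfun_mul]
  apply mfun_congr
  intro i
  show ihw hσ i * ew hσ i * ihw hσ i = indw hσ i
  unfold ihw q4w indw
  split
  · next h => simp
  · next h =>
    have hf : f4w hσ i ≠ 0 := ne_of_gt (f4w_pos hσ h)
    have key : f4w hσ i * f4w hσ i * (f4w hσ i * f4w hσ i) = ew hσ i := by
      rw [f4_mul_f4 hσ i]; exact sw_mul_sw hσ i
    rw [← key]
    field_simp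

lemma kron_sum {m' ι : Type*} [Fintype m'] [DecidableEq m'] (s : Finset ι)
    (A : Matrix m' m' ℂ) (f : ι → Matrix n n ℂ) :
    A ⊗ₖ (∑ i ∈ s, f i) = ∑ i ∈ s, A ⊗ₖ f i := by
  ext ⟨i, j⟩ ⟨k, l⟩
  simp [Matrix.kroneckerMap_apply, Matrix.sum_apply, Finset.mul_sum]

lemma real_smul_mat {a b : Type*} (r : ℝ) (X : Matrix a b ℂ) : r • X = (r : ℂ) • X := by
  ext i j
  simp [Complex.real_smul]

end more

lemma stepC_inner {ι ι' : Type*} [Fintype ι] [Fintype ι'] (c : ι → ℝ) (c' : ι' → ℝ)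
    (ρ : ι → Matrix n n ℂ) (G : ι' → Matrix n n ℂ) :
    ∑ x, ∑ z, c x * c' z * ((ρ x * G z).trace.re)
      = ((∑ x, ((c x : ℝ) : ℂ) • ρ x) * (∑ z, ((c' z : ℝ) : ℂ) • G z)).trace.re := by
  have expand : (∑ x, ((c x : ℝ) : ℂ) • ρ x) * (∑ z, ((c' z : ℝ) : ℂ) • G z)
      = ∑ x, ∑ z, (((c x * c' z : ℝ)) : ℂ) • (ρ x * G z) := by
    rw [Finset.sum_mul]
    refine Finset.sum_congr rfl fun x _ => ?_
    rw [Matrix.smul_mul, Finset.mul_sum, Finset.smul_sum]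
    refine Finset.sum_congr rfl fun z _ => ?_
    rw [Matrix.mul_smul, smul_smul]
    congr 1
    push_cast
    ring
  rw [expand, Matrix.trace_sum, Complex.re_sum]
  refine Finset.sum_congr rfl fun x _ => ?_
  rw [Matrix.trace_sum, Complex.re_sum]
  refine Finset.sum_congr rfl fun z _ => ?_
  rw [Matrix.trace_smul, smul_eq_mul, Complex.re_ofReal_mul]

end CSB

set_option maxHeartbeats 1000000 in
theorem cauchy_schwarz_bound_strong_case
    (n1 n2 m d1 d2 : ℕ)
    (Ext : (Fin n1 → Bool) → (Fin n2 → Bool) → Fin m → Bool)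
    (ρ1 : (Fin n1 → Bool) → Matrix (Fin d1) (Fin d1) ℂ)
    (ρ2 : (Fin n2 → Bool) → Matrix (Fin d2) (Fin d2) ℂ)
    (hρ1 : ∀ x1, (ρ1 x1).PosSemidef) (hρ1tr : (∑ x1, (ρ1 x1).trace) = 1)
    (hρ2 : ∀ x2, (ρ2 x2).PosSemidef) (hρ2tr : (∑ x2, (ρ2 x2).trace) = 1) :
    ∃ G : (Fin n2 → Bool) → Matrix (Fin d2) (Fin d2) ℂ,
      (∀ z2, (G z2).PosSemidef) ∧ (∑ z2, G z2) = 1 ∧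
      ((2:ℝ)^m)⁻¹ *
        (∑ y : Fin m → Bool, ∑ x1,
          traceNorm ((∑ x2 ∈ Finset.univ.filter (fun x2 => Ext x1 x2 = y),
              ρ1 x1 ⊗ₖ ρ2 x2)
            - ((2:ℝ)^m)⁻¹ • ∑ x2, ρ1 x1 ⊗ₖ ρ2 x2))^2
      ≤ ∑ x1, ∑ x2, ∑ z2, ∑ y : Fin m → Bool,
          ((if Ext x1 x2 = y then (1:ℝ) else 0) - ((2:ℝ)^m)⁻¹) *
          ((if Ext x1 z2 = y then (1:ℝ) else 0) - ((2:ℝ)^m)⁻¹) *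
          ((ρ1 x1).trace.re * ((ρ2 x2) * G z2).trace.re) := by
  classical
  set σ : Matrix (Fin d2) (Fin d2) ℂ := ∑ z2, ρ2 z2 with hσdef
  have hσ : σ.PosSemidef := CSB.psd_sum _ _ (fun i _ => hρ2 i)
  have hσtr : σ.trace = 1 := by rw [hσdef, Matrix.trace_sum]; exact hρ2tr
  set Nr : ℝ := (2:ℝ)^n2 with hNr
  have hNrpos : (0:ℝ) < Nr := by rw [hNr]; positivity
  set Qp : Matrix (Fin d2) (Fin d2) ℂ :=
    CSB.mfun hσ.1 (fun i => Nr⁻¹ * CSB.indcw hσ i) with hQpdef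
  set G : (Fin n2 → Bool) → Matrix (Fin d2) (Fin d2) ℂ :=
    fun z2 => CSB.ihm hσ * ρ2 z2 * CSB.ihm hσ + Qp with hGdef
  set B : (Fin n1 → Bool) → (Fin m → Bool) → Matrix (Fin d2) (Fin d2) ℂ :=
    fun x1 y => ∑ x2,
      (((if Ext x1 x2 = y then (1:ℝ) else 0) - ((2:ℝ)^m)⁻¹ : ℝ) : ℂ) • ρ2 x2 with hBdef
  -- basic facts
  have hQppsd : Qp.PosSemidef := by
    rw [hQpdef]
    apply CSB.mfun_posSemidef
    intro i
    apply mul_nonneg (inv_nonneg.mpr (le_of_lt hNrpos))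
    unfold CSB.indcw
    split <;> norm_num
  have hQpQm : Qp = Nr⁻¹ • CSB.Qm hσ := by
    rw [hQpdef]
    unfold CSB.Qm
    rw [CSB.mfun_smul]
  have hρQ : ∀ x2, ρ2 x2 * CSB.Qm hσ = 0 := by
    intro x2
    apply CSB.psd_mul_Qm_eq_zero hσ (hρ2 x2)
    have hsplit : σ - ρ2 x2 = ∑ z ∈ Finset.univ.erase x2, ρ2 z := by
      have h := Finset.add_sum_erase Finset.univ ρ2 (Finset.mem_univ x2)
      rw [hσdef, ← h, add_sub_cancel_left]
    rw [hsplit]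
    exact CSB.psd_sum _ _ (fun z _ => hρ2 z)
  have hBh : ∀ x1 y, (B x1 y).IsHermitian := by
    intro x1 y
    rw [hBdef]
    show (∑ x2, _)ᴴ = _
    rw [Matrix.conjTranspose_sum]
    refine Finset.sum_congr rfl fun x2 _ => ?_
    rw [Matrix.conjTranspose_smul, (hρ2 x2).1.eq]
    congr 1
    simp [Complex.star_def, Complex.conj_ofReal]
  have hBQ : ∀ x1 y, B x1 y * CSB.Qm hσ = 0 := by
    intro x1 y
    rw [hBdef]
    show (∑ x2, _) * _ = 0
    rw [Finset.sum_mul]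
    refine Finset.sum_eq_zero fun x2 _ => ?_
    rw [Matrix.smul_mul, hρQ x2, smul_zero]
  have hBQp : ∀ x1 y, B x1 y * Qp = 0 := by
    intro x1 y
    rw [hQpQm, Matrix.mul_smul, hBQ x1 y, smul_zero]
  refine ⟨G, ?_, ?_, ?_⟩
  · -- PSD
    intro z2
    rw [hGdef]
    apply Matrix.PosSemidef.add _ hQppsd
    have h := (hρ2 z2).mul_mul_conjTranspose_same (CSB.ihm hσ)
    rwa [CSB.ihm_herm] at h
  · -- sums to 1
    rw [hGdef]
    rw [Finset.sum_add_distrib]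
    have h1 : ∑ z2, CSB.ihm hσ * ρ2 z2 * CSB.ihm hσ = CSB.Pm hσ := by
      rw [← Finset.sum_mul, ← Finset.mul_sum, ← hσdef]
      exact CSB.ihm_sigma_ihm hσ
    have h2 : (∑ _z2 : Fin n2 → Bool, Qp) = CSB.Qm hσ := by
      rw [Finset.sum_const, Finset.card_univ]
      have hcard : (Fintype.card (Fin n2 → Bool)) = 2 ^ n2 := by
        simp [Fintype.card_fun]
      rw [hcard, hQpQm]
      rw [← Nat.cast_smul_eq_nsmul ℝ, smul_smul]
      have : ((2 ^ n2 : ℕ) : ℝ) * Nr⁻¹ = 1 := by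
        rw [hNr]
        push_cast
        field_simp
      rw [this, one_smul]
    rw [h1, h2, CSB.Pm_add_Qm]
  · -- main inequality
    -- LHS matrix reduction
    have hred : ∀ x1 y, (∑ x2 ∈ Finset.univ.filter (fun x2 => Ext x1 x2 = y),
        ρ1 x1 ⊗ₖ ρ2 x2) - ((2:ℝ)^m)⁻¹ • ∑ x2, ρ1 x1 ⊗ₖ ρ2 x2 = ρ1 x1 ⊗ₖ B x1 y := by
      intro x1 y
      rw [hBdef]
      rw [CSB.kron_sum]
      rw [CSB.real_smul_mat, Finset.smul_sum, Finset.sum_filter, ← Finset.sum_sub_distrib]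
      refine Finset.sum_congr rfl fun x2 _ => ?_
      rw [Matrix.kronecker_smul]
      by_cases hp : Ext x1 x2 = y
      · simp only [if_pos hp, Complex.ofReal_sub, Complex.ofReal_one, sub_smul, one_smul]
      · simp only [if_neg hp, Complex.ofReal_sub, Complex.ofReal_zero, sub_smul, zero_smul,
          zero_sub, Complex.ofReal_neg, neg_smul]
    have hL : (∑ y : Fin m → Bool, ∑ x1,
        traceNorm ((∑ x2 ∈ Finset.univ.filter (fun x2 => Ext x1 x2 = y),
            ρ1 x1 ⊗ₖ ρ2 x2) - ((2:ℝ)^m)⁻¹ • ∑ x2, ρ1 x1 ⊗ₖ ρ2 x2))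
        = ∑ y : Fin m → Bool, ∑ x1, (ρ1 x1).trace.re * traceNorm (B x1 y) := by
      refine Finset.sum_congr rfl fun y _ => Finset.sum_congr rfl fun x1 _ => ?_
      rw [hred x1 y, CSB.traceNorm_kron (hρ1 x1)]
    rw [hL]
    -- RHS reduction
    have hCGval : ∀ x1 y, (∑ z2, (((if Ext x1 z2 = y then (1:ℝ) else 0) - ((2:ℝ)^m)⁻¹ : ℝ) : ℂ) • G z2)
        = CSB.ihm hσ * B x1 y * CSB.ihm hσ
          + (∑ z2, (((if Ext x1 z2 = y then (1:ℝ) else 0) - ((2:ℝ)^m)⁻¹ : ℝ) : ℂ)) • Qp := by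
      intro x1 y
      rw [hGdef]
      simp only [smul_add]
      rw [Finset.sum_add_distrib, ← Finset.sum_smul]
      congr 1
      rw [hBdef]
      show _ = CSB.ihm hσ * (∑ x2, _) * CSB.ihm hσ
      rw [Finset.mul_sum, Finset.sum_mul]
      refine Finset.sum_congr rfl fun z2 _ => ?_
      rw [Matrix.mul_smul, Matrix.smul_mul]
    have hTTeq : ∀ x1 y, (B x1 y * ((∑ z2, (((if Ext x1 z2 = y then (1:ℝ) else 0) - ((2:ℝ)^m)⁻¹ : ℝ) : ℂ) • G z2))).trace.re
        = ((B x1 y * CSB.ihm hσ) * (B x1 y * CSB.ihm hσ)).trace.re := by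
      intro x1 y
      rw [hCGval x1 y, Matrix.mul_add, Matrix.mul_smul, hBQp x1 y, smul_zero, add_zero]
      congr 2
      simp only [Matrix.mul_assoc]
    have hR : (∑ x1, ∑ x2, ∑ z2, ∑ y : Fin m → Bool,
          ((if Ext x1 x2 = y then (1:ℝ) else 0) - ((2:ℝ)^m)⁻¹) *
          ((if Ext x1 z2 = y then (1:ℝ) else 0) - ((2:ℝ)^m)⁻¹) *
          ((ρ1 x1).trace.re * ((ρ2 x2) * G z2).trace.re))
        = ∑ x1, (ρ1 x1).trace.re *
            ∑ y : Fin m → Bool, ((B x1 y * CSB.ihm hσ) * (B x1 y * CSB.ihm hσ)).trace.re := by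
      refine Finset.sum_congr rfl fun x1 _ => ?_
      rw [show (∑ x2, ∑ z2, ∑ y : Fin m → Bool,
          ((if Ext x1 x2 = y then (1:ℝ) else 0) - ((2:ℝ)^m)⁻¹) *
          ((if Ext x1 z2 = y then (1:ℝ) else 0) - ((2:ℝ)^m)⁻¹) *
          ((ρ1 x1).trace.re * ((ρ2 x2) * G z2).trace.re))
        = ∑ y : Fin m → Bool, ∑ x2, ∑ z2,
          ((if Ext x1 x2 = y then (1:ℝ) else 0) - ((2:ℝ)^m)⁻¹) *
          ((if Ext x1 z2 = y then (1:ℝ) else 0) - ((2:ℝ)^m)⁻¹) *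
          ((ρ1 x1).trace.re * ((ρ2 x2) * G z2).trace.re) from by
          calc (∑ x2, ∑ z2, ∑ y : Fin m → Bool,
              ((if Ext x1 x2 = y then (1:ℝ) else 0) - ((2:ℝ)^m)⁻¹) *
              ((if Ext x1 z2 = y then (1:ℝ) else 0) - ((2:ℝ)^m)⁻¹) *
              ((ρ1 x1).trace.re * ((ρ2 x2) * G z2).trace.re))
              = ∑ x2, ∑ y : Fin m → Bool, ∑ z2,
              ((if Ext x1 x2 = y then (1:ℝ) else 0) - ((2:ℝ)^m)⁻¹) *
              ((if Ext x1 z2 = y then (1:ℝ) else 0) - ((2:ℝ)^m)⁻¹) *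
              ((ρ1 x1).trace.re * ((ρ2 x2) * G z2).trace.re) :=
              Finset.sum_congr rfl fun x2 _ => Finset.sum_comm
            _ = _ := Finset.sum_comm]
      rw [Finset.mul_sum]
      refine Finset.sum_congr rfl fun y _ => ?_
      have hpull : (∑ x2, ∑ z2,
          ((if Ext x1 x2 = y then (1:ℝ) else 0) - ((2:ℝ)^m)⁻¹) *
          ((if Ext x1 z2 = y then (1:ℝ) else 0) - ((2:ℝ)^m)⁻¹) *
          ((ρ1 x1).trace.re * ((ρ2 x2) * G z2).trace.re))
          = (ρ1 x1).trace.re * ∑ x2, ∑ z2,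
          ((if Ext x1 x2 = y then (1:ℝ) else 0) - ((2:ℝ)^m)⁻¹) *
          ((if Ext x1 z2 = y then (1:ℝ) else 0) - ((2:ℝ)^m)⁻¹) *
          (((ρ2 x2) * G z2).trace.re) := by
        rw [Finset.mul_sum]
        refine Finset.sum_congr rfl fun x2 _ => ?_
        rw [Finset.mul_sum]
        refine Finset.sum_congr rfl fun z2 _ => ?_
        ring
      rw [hpull]
      congr 1
      have hcs := CSB.stepC_inner
        (fun x2 => ((if Ext x1 x2 = y then (1:ℝ) else 0) - ((2:ℝ)^m)⁻¹))
        (fun z2 => ((if Ext x1 z2 = y then (1:ℝ) else 0) - ((2:ℝ)^m)⁻¹)) ρ2 G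
      rw [hcs]
      rw [show (∑ x2, (((if Ext x1 x2 = y then (1:ℝ) else 0) - ((2:ℝ)^m)⁻¹ : ℝ) : ℂ) • ρ2 x2) = B x1 y from (hBdef ▸ rfl)]
      exact hTTeq x1 y
    rw [hR]
    -- scalar Cauchy-Schwarz chain
    have ht0 : ∀ x1, 0 ≤ (ρ1 x1).trace.re := fun x1 => CSB.psd_trace_re_nonneg (hρ1 x1)
    have ht1 : (∑ x1, (ρ1 x1).trace.re) = 1 := by
      have h := congrArg Complex.re hρ1tr
      rw [Complex.re_sum] at h
      simpa using h
    have hF0 : ∀ x1 y, 0 ≤ traceNorm (B x1 y) := fun x1 y =>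
      CSB.traceNorm_herm_nonneg (hBh x1 y)
    have key : ∀ x1 y, traceNorm (B x1 y) ^ 2
        ≤ ((B x1 y * CSB.ihm hσ) * (B x1 y * CSB.ihm hσ)).trace.re := fun x1 y =>
      CSB.stepB hσ hσtr (hBh x1 y) (hBQ x1 y)
    have hswap : (∑ y : Fin m → Bool, ∑ x1, (ρ1 x1).trace.re * traceNorm (B x1 y))
        = ∑ x1, (ρ1 x1).trace.re * ∑ y : Fin m → Bool, traceNorm (B x1 y) := by
      rw [Finset.sum_comm]
      exact Finset.sum_congr rfl fun x1 _ => (Finset.mul_sum _ _ _).symm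
    rw [hswap]
    have cs1 : (∑ x1, (ρ1 x1).trace.re * ∑ y : Fin m → Bool, traceNorm (B x1 y))^2
        ≤ ∑ x1, (ρ1 x1).trace.re * (∑ y : Fin m → Bool, traceNorm (B x1 y))^2 := by
      have h := Finset.sum_mul_sq_le_sq_mul_sq Finset.univ
        (fun x1 => Real.sqrt ((ρ1 x1).trace.re))
        (fun x1 => Real.sqrt ((ρ1 x1).trace.re) * ∑ y : Fin m → Bool, traceNorm (B x1 y))
      have e1 : (∑ x1, Real.sqrt ((ρ1 x1).trace.re) *
            (Real.sqrt ((ρ1 x1).trace.re) * ∑ y : Fin m → Bool, traceNorm (B x1 y)))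
          = ∑ x1, (ρ1 x1).trace.re * ∑ y : Fin m → Bool, traceNorm (B x1 y) :=
        Finset.sum_congr rfl fun x1 _ => by rw [← mul_assoc, Real.mul_self_sqrt (ht0 x1)]
      have e2 : (∑ x1, Real.sqrt ((ρ1 x1).trace.re) ^ 2) = ∑ x1, (ρ1 x1).trace.re :=
        Finset.sum_congr rfl fun x1 _ => Real.sq_sqrt (ht0 x1)
      have e3 : (∑ x1, (Real.sqrt ((ρ1 x1).trace.re) * ∑ y : Fin m → Bool, traceNorm (B x1 y))^2)
          = ∑ x1, (ρ1 x1).trace.re * (∑ y : Fin m → Bool, traceNorm (B x1 y))^2 :=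
        Finset.sum_congr rfl fun x1 _ => by rw [mul_pow, Real.sq_sqrt (ht0 x1)]
      rw [e1, e2, e3] at h
      rwa [ht1, one_mul] at h
    have hcard2m : (∑ _y : Fin m → Bool, (1:ℝ)) = (2:ℝ)^m := by
      rw [Finset.sum_const, Finset.card_univ]
      have hcard : (Fintype.card (Fin m → Bool)) = 2 ^ m := by simp [Fintype.card_fun]
      rw [hcard, nsmul_eq_mul]
      push_cast
      ring
    have cs2 : ∀ x1, (∑ y : Fin m → Bool, traceNorm (B x1 y))^2
        ≤ (2:ℝ)^m * ∑ y : Fin m → Bool, traceNorm (B x1 y)^2 := by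
      intro x1
      have h := Finset.sum_mul_sq_le_sq_mul_sq Finset.univ
        (fun _ : Fin m → Bool => (1:ℝ)) (fun y => traceNorm (B x1 y))
      simp only [one_mul, one_pow] at h
      rwa [hcard2m] at h
    have hMnn : (0:ℝ) ≤ ((2:ℝ)^m)⁻¹ := by positivity
    calc ((2:ℝ)^m)⁻¹ * (∑ x1, (ρ1 x1).trace.re * ∑ y : Fin m → Bool, traceNorm (B x1 y))^2
        ≤ ((2:ℝ)^m)⁻¹ * ∑ x1, (ρ1 x1).trace.re * (∑ y : Fin m → Bool, traceNorm (B x1 y))^2 :=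
          mul_le_mul_of_nonneg_left cs1 hMnn
      _ ≤ ((2:ℝ)^m)⁻¹ * ∑ x1, (ρ1 x1).trace.re *
            ((2:ℝ)^m * ∑ y : Fin m → Bool, traceNorm (B x1 y)^2) := by
          apply mul_le_mul_of_nonneg_left _ hMnn
          exact Finset.sum_le_sum fun x1 _ => mul_le_mul_of_nonneg_left (cs2 x1) (ht0 x1)
      _ = ∑ x1, (ρ1 x1).trace.re * ∑ y : Fin m → Bool, traceNorm (B x1 y)^2 := by
          rw [Finset.mul_sum]
          refine Finset.sum_congr rfl fun x1 _ => ?_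
          have h2m : ((2:ℝ)^m) ≠ 0 := by positivity
          field_simp
      _ ≤ ∑ x1, (ρ1 x1).trace.re *
            ∑ y : Fin m → Bool, ((B x1 y * CSB.ihm hσ) * (B x1 y * CSB.ihm hσ)).trace.re := by
          refine Finset.sum_le_sum fun x1 _ => ?_
          refine mul_le_mul_of_nonneg_left ?_ (ht0 x1)
          exact Finset.sum_le_sum fun y _ => key x1 y
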